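/- Let A be a 2×2 complex matrix whose two eigenvalues λ₁ and λ₂ satisfy |λ₁| ≠ |λ₂|. Then A cannot be written as PU + U*P^⊥ for any orthogonal projection P and unitary U on ℂ². -/

import Mathlib

open Matrix Polynomial

private lemma eval_charpoly_fin_two' (M : Matrix (Fin 2) (Fin 2) ℂ) (l : ℂ) :
    M.charpoly.eval l = Matrix.det (l • (1 : Matrix (Fin 2) (Fin 2) ℂ) - M) := by
  rw [Matrix.charpoly, Matrix.det_fin_two, Matrix.det_fin_two]
  simp [Matrix.charmatrix_apply_eq, Matrix.charmatrix_apply_ne, Matrix.smul_apply,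
    Matrix.one_apply]

/-- Any root of the characteristic polynomial of a `2×2` unitary has norm 1. -/
private lemma norm_root_of_unitary (M : Matrix (Fin 2) (Fin 2) ℂ)
    (hM : Mᴴ * M = 1) (l : ℂ) (hl : M.charpoly.eval l = 0) : ‖l‖ = 1 := by
  rw [eval_charpoly_fin_two'] at hl
  obtain ⟨v, hv0, hv⟩ := (Matrix.exists_mulVec_eq_zero_iff).2 hl
  have hMv : M.mulVec v = l • v := by
    rw [Matrix.sub_mulVec, Matrix.smul_mulVec, Matrix.one_mulVec, sub_eq_zero] at hv
    exact hv.symm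
  have key : star (M.mulVec v) ⬝ᵥ (M.mulVec v) = star v ⬝ᵥ v := by
    rw [Matrix.star_mulVec, Matrix.dotProduct_mulVec, Matrix.vecMul_vecMul, hM,
      Matrix.vecMul_one]
  rw [hMv, star_smul, smul_dotProduct, dotProduct_smul] at key
  have hdp : star v ⬝ᵥ v = ((Complex.normSq (v 0) + Complex.normSq (v 1) : ℝ) : ℂ) := by
    simp [dotProduct, Fin.sum_univ_two, ← Complex.normSq_eq_conj_mul_self]
  have hvv : star v ⬝ᵥ v ≠ 0 := by
    intro h
    rw [hdp] at h
    norm_cast at h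
    have h0 : Complex.normSq (v 0) = 0 ∧ Complex.normSq (v 1) = 0 := by
      constructor <;> nlinarith [Complex.normSq_nonneg (v 0), Complex.normSq_nonneg (v 1)]
    exact hv0 (funext fun i => by
      fin_cases i
      · exact Complex.normSq_eq_zero.1 h0.1
      · exact Complex.normSq_eq_zero.1 h0.2)
  have hll : (starRingEnd ℂ) l * l = 1 := by
    have h2 : ((starRingEnd ℂ) l * l - 1) * (star v ⬝ᵥ v) = 0 := by
      rw [sub_mul, one_mul, sub_eq_zero]
      simpa [smul_eq_mul, mul_assoc] using key
    rcases mul_eq_zero.1 h2 with h | h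
    · exact sub_eq_zero.1 h
    · exact absurd h hvv
  have habs := congrArg norm hll
  rw [norm_mul, norm_one, Complex.norm_conj] at habs
  nlinarith [norm_nonneg l]


private lemma norm_eq_of_star_mul (a b : ℂ) (h : star a * a = b * star b) : ‖a‖ = ‖b‖ := by
  have := congrArg norm h
  rw [norm_mul, norm_mul] at this
  simp only [Complex.norm_conj, RCLike.star_def] at this
  nlinarith [norm_nonneg a, norm_nonneg b]

private lemma dist_moduli_aux (a b l₁ l₂ : ℂ) (hs : a + b = l₁ + l₂) (hp : a * b = l₁ * l₂)
    (hab : ‖a‖ = ‖b‖) : ‖l₁‖ = ‖l₂‖ := by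
  have hroot : (l₁ - a) * (l₁ - b) = 0 := by linear_combination (-l₁) * hs + hp
  rcases mul_eq_zero.1 hroot with h | h
  · have h1 : l₁ = a := by linear_combination h
    have h2 : l₂ = b := by linear_combination -hs - h
    rw [h1, h2, hab]
  · have h1 : l₁ = b := by linear_combination h
    have h2 : l₂ = a := by linear_combination -hs - h
    rw [h1, h2, hab]

/-- A `2 × 2` complex matrix whose two eigenvalues have distinct moduli cannot be
written as `PU + U*P^⊥` with `P` an orthogonal projection and `U` a unitary. -/
theorem not_PU_form_of_ne_abs_eigenvalues (A : Matrix (Fin 2) (Fin 2) ℂ) (l₁ l₂ : ℂ)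
    (hchar : A.charpoly = (X - Polynomial.C l₁) * (X - Polynomial.C l₂))
    (hne : ‖l₁‖ ≠ ‖l₂‖) :
    ¬ ∃ P U : Matrix (Fin 2) (Fin 2) ℂ,
        Pᴴ = P ∧ P * P = P ∧ Uᴴ * U = 1 ∧ U * Uᴴ = 1 ∧
        A = P * U + Uᴴ * (1 - P) := by
  rintro ⟨P, U, hP, hP2, hU1, hU2, hA⟩
  have hHerm : P.IsHermitian := hP
  set V : Matrix (Fin 2) (Fin 2) ℂ := (hHerm.eigenvectorUnitary : Matrix (Fin 2) (Fin 2) ℂ)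
    with hVdef
  set d : Fin 2 → ℂ := fun i => ((hHerm.eigenvalues i : ℝ) : ℂ) with hddef
  set D : Matrix (Fin 2) (Fin 2) ℂ := Matrix.diagonal d with hDdef
  have hVV : V * Vᴴ = 1 := by
    have := (Unitary.mem_iff.mp hHerm.eigenvectorUnitary.2).2
    simpa [Matrix.star_eq_conjTranspose] using this
  have hVV' : Vᴴ * V = 1 := by
    have := (Unitary.mem_iff.mp hHerm.eigenvectorUnitary.2).1
    simpa [Matrix.star_eq_conjTranspose] using this
  have cVV : ∀ X : Matrix (Fin 2) (Fin 2) ℂ, V * (Vᴴ * X) = X := fun X => by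
    rw [← Matrix.mul_assoc, hVV, Matrix.one_mul]
  have cV'V : ∀ X : Matrix (Fin 2) (Fin 2) ℂ, Vᴴ * (V * X) = X := fun X => by
    rw [← Matrix.mul_assoc, hVV', Matrix.one_mul]
  have hV : P = V * D * Vᴴ := by
    have := hHerm.spectral_theorem
    rw [this]
    rfl
  -- D is a projection-type diagonal
  have hDD : D * D = D := by
    have h2 : Vᴴ * ((V * D * Vᴴ) * (V * D * Vᴴ)) * V = Vᴴ * (V * D * Vᴴ) * V := by
      rw [← hV, hP2]
    simp only [Matrix.mul_assoc, cVV, cV'V, hVV, hVV', Matrix.mul_one, Matrix.one_mul] at h2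
    simpa [Matrix.mul_assoc] using h2
  have hd : ∀ i, d i = 0 ∨ d i = 1 := by
    intro i
    have := congrArg (fun M => M i i) hDD
    simp only [hDdef, Matrix.diagonal_mul_diagonal, Matrix.diagonal_apply_eq] at this
    have h0 : d i * (d i - 1) = 0 := by linear_combination this
    rcases mul_eq_zero.1 h0 with h | h
    · exact Or.inl h
    · exact Or.inr (by linear_combination h)
  set W : Matrix (Fin 2) (Fin 2) ℂ := Vᴴ * U * V with hWdef
  have hW1 : Wᴴ * W = 1 := by
    simp only [hWdef, Matrix.conjTranspose_mul, Matrix.conjTranspose_conjTranspose]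
    simp only [Matrix.mul_assoc, cVV, cV'V]
    simp only [← Matrix.mul_assoc, hU1]
    simpa [Matrix.mul_assoc] using hVV'
  have hW2 : W * Wᴴ = 1 := by
    simp only [hWdef, Matrix.conjTranspose_mul, Matrix.conjTranspose_conjTranspose]
    simp only [Matrix.mul_assoc, cVV, cV'V]
    simp only [← Matrix.mul_assoc, hU2]
    simpa [Matrix.mul_assoc] using hVV'
  -- trace and determinant of A from charpoly
  have hpoly : (X - Polynomial.C l₁) * (X - Polynomial.C l₂)
      = X ^ 2 - Polynomial.C (l₁ + l₂) * X + Polynomial.C (l₁ * l₂) := by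
    rw [map_add, _root_.map_mul]; ring
  have ht : Matrix.trace A = l₁ + l₂ := by
    rw [Matrix.trace_eq_neg_charpoly_coeff, hchar, hpoly]
    simp [coeff_add, coeff_sub, coeff_X_pow, coeff_C_mul, coeff_C]
  have hdetA : A.det = l₁ * l₂ := by
    rw [Matrix.det_eq_sign_charpoly_coeff, hchar, hpoly]
    simp [coeff_add, coeff_sub, coeff_X_pow, coeff_C_mul, coeff_C]
  rcases hd 0 with h0 | h0 <;> rcases hd 1 with h1 | h1
  · -- P = 0, A = Uᴴ
    have hD0 : D = 0 := by
      rw [hDdef]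
      ext i j
      rcases Matrix.diagonal_apply d i j with _ | _ <;> fin_cases i <;> fin_cases j <;>
        simp [Matrix.diagonal_apply, h0, h1]
    have hP0 : P = 0 := by rw [hV, hD0]; simp
    have hAU : A = Uᴴ := by rw [hA, hP0]; simp
    have hA1 : Aᴴ * A = 1 := by rw [hAU, Matrix.conjTranspose_conjTranspose]; exact hU2
    have e1 : ‖l₁‖ = 1 := norm_root_of_unitary A hA1 l₁ (by rw [hchar]; simp)
    have e2 : ‖l₂‖ = 1 := norm_root_of_unitary A hA1 l₂ (by rw [hchar]; simp)
    exact hne (by rw [e1, e2])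
  · -- d = (0, 1): lower-triangular case
    have ha : star (W 0 0) * W 0 0 + star (W 1 0) * W 1 0 = 1 := by
      have := congrArg (fun M => M 0 0) hW1
      simpa [Matrix.mul_apply, Fin.sum_univ_two, Matrix.one_apply,
        Matrix.conjTranspose_apply] using this
    have hb : W 1 0 * star (W 1 0) + W 1 1 * star (W 1 1) = 1 := by
      have := congrArg (fun M => M 1 1) hW2
      simpa [Matrix.mul_apply, Fin.sum_univ_two, Matrix.one_apply,
        Matrix.conjTranspose_apply] using this
    have hab : ‖W 0 0‖ = ‖W 1 1‖ :=
      norm_eq_of_star_mul _ _ (by linear_combination ha - hb)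
    set B : Matrix (Fin 2) (Fin 2) ℂ := D * W + Wᴴ * (1 - D) with hBdef
    have hAB : A = V * B * Vᴴ := by
      rw [hA, hV, hBdef, hWdef]
      simp only [Matrix.conjTranspose_mul, Matrix.conjTranspose_conjTranspose,
        Matrix.mul_add, Matrix.add_mul, Matrix.mul_sub, Matrix.sub_mul,
        Matrix.mul_one, Matrix.one_mul, Matrix.mul_assoc, cVV, cV'V, hVV, hVV']
    have htrB : Matrix.trace B = star (W 0 0) + W 1 1 := by
      rw [Matrix.trace_fin_two]
      simp [hBdef, Matrix.mul_apply, Fin.sum_univ_two, Matrix.diagonal, Matrix.one_apply,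
        hDdef, h0, h1, Matrix.conjTranspose_apply]
    have hdetB : B.det = star (W 0 0) * W 1 1 := by
      rw [Matrix.det_fin_two]
      simp [hBdef, Matrix.mul_apply, Fin.sum_univ_two, Matrix.diagonal, Matrix.one_apply,
        hDdef, h0, h1, Matrix.conjTranspose_apply]
    have hs : star (W 0 0) + W 1 1 = l₁ + l₂ := by
      rw [← htrB, ← ht, hAB, Matrix.trace_mul_cycle, hVV', Matrix.one_mul]
    have hVdet : V.det * Vᴴ.det = 1 := by rw [← Matrix.det_mul, hVV, Matrix.det_one]
    have hp : star (W 0 0) * W 1 1 = l₁ * l₂ := by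
      rw [← hdetB, ← hdetA, hAB, Matrix.det_mul, Matrix.det_mul]
      linear_combination (-B.det) * hVdet
    exact hne (dist_moduli_aux _ _ _ _ hs hp (by simpa using hab) )
  · -- d = (1, 0): upper-triangular case
    have ha : star (W 0 0) * W 0 0 + star (W 1 0) * W 1 0 = 1 := by
      have := congrArg (fun M => M 0 0) hW1
      simpa [Matrix.mul_apply, Fin.sum_univ_two, Matrix.one_apply,
        Matrix.conjTranspose_apply] using this
    have hb : W 1 0 * star (W 1 0) + W 1 1 * star (W 1 1) = 1 := by
      have := congrArg (fun M => M 1 1) hW2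
      simpa [Matrix.mul_apply, Fin.sum_univ_two, Matrix.one_apply,
        Matrix.conjTranspose_apply] using this
    have hab : ‖W 0 0‖ = ‖W 1 1‖ :=
      norm_eq_of_star_mul _ _ (by linear_combination ha - hb)
    set B : Matrix (Fin 2) (Fin 2) ℂ := D * W + Wᴴ * (1 - D) with hBdef
    have hAB : A = V * B * Vᴴ := by
      rw [hA, hV, hBdef, hWdef]
      simp only [Matrix.conjTranspose_mul, Matrix.conjTranspose_conjTranspose,
        Matrix.mul_add, Matrix.add_mul, Matrix.mul_sub, Matrix.sub_mul,
        Matrix.mul_one, Matrix.one_mul, Matrix.mul_assoc, cVV, cV'V, hVV, hVV']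
    have htrB : Matrix.trace B = W 0 0 + star (W 1 1) := by
      rw [Matrix.trace_fin_two]
      simp [hBdef, Matrix.mul_apply, Fin.sum_univ_two, Matrix.diagonal, Matrix.one_apply,
        hDdef, h0, h1, Matrix.conjTranspose_apply]
    have hdetB : B.det = W 0 0 * star (W 1 1) := by
      rw [Matrix.det_fin_two]
      simp [hBdef, Matrix.mul_apply, Fin.sum_univ_two, Matrix.diagonal, Matrix.one_apply,
        hDdef, h0, h1, Matrix.conjTranspose_apply]
    have hs : W 0 0 + star (W 1 1) = l₁ + l₂ := by
      rw [← htrB, ← ht, hAB, Matrix.trace_mul_cycle, hVV', Matrix.one_mul]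
    have hVdet : V.det * Vᴴ.det = 1 := by rw [← Matrix.det_mul, hVV, Matrix.det_one]
    have hp : W 0 0 * star (W 1 1) = l₁ * l₂ := by
      rw [← hdetB, ← hdetA, hAB, Matrix.det_mul, Matrix.det_mul]
      linear_combination (-B.det) * hVdet
    exact hne (dist_moduli_aux _ _ _ _ hs hp (by simpa using hab))
  · -- P = 1, A = U
    have hD1 : D = 1 := by
      rw [hDdef]
      ext i j
      fin_cases i <;> fin_cases j <;> simp [Matrix.diagonal_apply, Matrix.one_apply, h0, h1]
    have hP1 : P = 1 := by rw [hV, hD1, Matrix.mul_one, hVV]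
    have hAU : A = U := by rw [hA, hP1]; simp
    have hA1 : Aᴴ * A = 1 := by rw [hAU]; exact hU1
    have e1 : ‖l₁‖ = 1 := norm_root_of_unitary A hA1 l₁ (by rw [hchar]; simp)
    have e2 : ‖l₂‖ = 1 := norm_root_of_unitary A hA1 l₂ (by rw [hchar]; simp)
    exact hne (by rw [e1, e2])
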